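/- Let d, T be natural numbers with d ≥ 1, let λ > 0 and B ≥ 0 be reals, let x_0, …, x_{T−1} ∈ ℝ^d satisfy ‖x_t‖₂ ≤ B for all t < T, and let c_0, …, c_{T−1} ≥ 0 be reals. Define the matrices Σ_0 = λ·I and Σ_{t+1} = Σ_t + x_t x_tᵀ + c_t·I for t < T, and set w_t² = x_tᵀ Σ_t⁻¹ x_t. If β ≥ 0 and r_0, …, r_{T−1} are reals satisfying 0 ≤ r_t and r_t² ≤ 4·β·min(w_t², 1) for every t < T, then the cumulative regret satisfies Σ_{t=0}^{T−1} r_t ≤ √(8·T·β·d·log(1 + (T·B² + d·Σ_{t=0}^{T−1} c_t)/(d·λ))). -/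

import Mathlib

open Matrix Finset

section Helpers

variable {d : ℕ}

lemma psd_vecMulVec (x : Fin d → ℝ) : (vecMulVec x x).PosSemidef := by
  refine posSemidef_iff_dotProduct_mulVec.mpr ⟨?_, ?_⟩
  · ext i j; simp [vecMulVec_apply, conjTranspose_apply, mul_comm]
  · intro y
    have h : star y ⬝ᵥ (vecMulVec x x *ᵥ y) = (x ⬝ᵥ y)^2 := by
      simp only [star_trivial, vecMulVec, mulVec, dotProduct, of_apply, sq,
        Finset.mul_sum, Finset.sum_mul]
      exact Finset.sum_congr rfl fun i _ => Finset.sum_congr rfl fun j _ => by ring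
    rw [h]; positivity

lemma posdef_smul_one {lam : ℝ} (h : 0 < lam) :
    (lam • (1 : Matrix (Fin d) (Fin d) ℝ)).PosDef := by
  rw [smul_one_eq_diagonal]
  exact posDef_diagonal_iff.mpr fun _ => h

lemma psd_smul_one {c : ℝ} (h : 0 ≤ c) :
    (c • (1 : Matrix (Fin d) (Fin d) ℝ)).PosSemidef := by
  rw [smul_one_eq_diagonal]
  exact .diagonal fun _ => h

lemma trace_herm {A : Matrix (Fin d) (Fin d) ℝ} (hA : A.IsHermitian) :
    A.trace = ∑ i, hA.eigenvalues i := by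
  nth_rewrite 1 [hA.spectral_theorem, Unitary.conjStarAlgAut_apply]
  rw [Matrix.trace_mul_cycle]
  have h : (star (hA.eigenvectorUnitary : Matrix (Fin d) (Fin d) ℝ)) *
      (hA.eigenvectorUnitary : Matrix (Fin d) (Fin d) ℝ) = 1 :=
    (Matrix.mem_unitaryGroup_iff').mp (hA.eigenvectorUnitary).2
  rw [h, one_mul, Matrix.trace_diagonal]
  simp

lemma det_one_add_herm {A : Matrix (Fin d) (Fin d) ℝ} (hA : A.IsHermitian) :
    (1 + A).det = ∏ i, (1 + hA.eigenvalues i) := by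
  have hU : (hA.eigenvectorUnitary : Matrix (Fin d) (Fin d) ℝ) *
      (star (hA.eigenvectorUnitary : Matrix (Fin d) (Fin d) ℝ)) = 1 :=
    (Matrix.mem_unitaryGroup_iff).mp (hA.eigenvectorUnitary).2
  have h1 : (1 + A) = (hA.eigenvectorUnitary : Matrix (Fin d) (Fin d) ℝ) *
      (1 + diagonal (RCLike.ofReal ∘ hA.eigenvalues)) *
      (star (hA.eigenvectorUnitary : Matrix (Fin d) (Fin d) ℝ)) := by
    rw [Matrix.mul_add, Matrix.add_mul, Matrix.mul_one, hU, ← Unitary.conjStarAlgAut_apply (S := ℝ), ← hA.spectral_theorem]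
  rw [h1, Matrix.det_mul, Matrix.det_mul, mul_comm (Matrix.det _), mul_assoc,
    ← Matrix.det_mul, hU, Matrix.det_one, mul_one]
  have h2 : (1 : Matrix (Fin d) (Fin d) ℝ) + diagonal (RCLike.ofReal ∘ hA.eigenvalues)
      = diagonal (fun i => 1 + hA.eigenvalues i) := by
    rw [← Matrix.diagonal_one, Matrix.diagonal_add]
    rfl
  rw [h2, Matrix.det_diagonal]

lemma det_one_add_ge {M : Matrix (Fin d) (Fin d) ℝ} (hM : M.PosSemidef) :
    1 ≤ (1 + M).det := by
  rw [det_one_add_herm hM.1]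
  calc (1:ℝ) = ∏ _i : Fin d, 1 := by simp
  _ ≤ ∏ i, (1 + hM.1.eigenvalues i) :=
    Finset.prod_le_prod (fun _ _ => zero_le_one) fun i _ => by linarith [hM.eigenvalues_nonneg i]

lemma det_le_det_add {A P : Matrix (Fin d) (Fin d) ℝ} (hA : A.PosDef) (hP : P.PosSemidef) :
    A.det ≤ (A + P).det := by
  obtain ⟨Q, hQ, rfl⟩ : ∃ Q : Matrix (Fin d) (Fin d) ℝ, Q.PosSemidef ∧ P = Q * Q :=
    open scoped MatrixOrder in
    ⟨CFC.sqrt P, (CFC.sqrt_nonneg P).posSemidef, (CFC.sqrt_mul_sqrt_self P hP.nonneg).symm⟩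
  have hAP : A + Q * Q = A * (1 + A⁻¹ * (Q * Q)) := by
    rw [Matrix.mul_add, Matrix.mul_one, ← Matrix.mul_assoc,
      Matrix.mul_nonsing_inv A hA.det_pos.ne'.isUnit, one_mul]
  rw [hAP, Matrix.det_mul]
  have h2 : (1 + A⁻¹ * (Q * Q)).det = (1 + Q * (A⁻¹ * Q)).det := by
    rw [← Matrix.mul_assoc, Matrix.det_one_add_mul_comm]
  have h3 : (Q * (A⁻¹ * Q)).PosSemidef := by
    have := hA.inv.posSemidef.conjTranspose_mul_mul_same Q
    rwa [hQ.1.eq, Matrix.mul_assoc] at this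
  have h4 := det_one_add_ge h3
  nlinarith [hA.det_pos]

lemma det_add_vecMulVec {A : Matrix (Fin d) (Fin d) ℝ} (hA : A.PosDef) (x : Fin d → ℝ) :
    (A + vecMulVec x x).det = A.det * (1 + x ⬝ᵥ A⁻¹ *ᵥ x) := by
  have hsym : ∀ i j, A⁻¹ i j = A⁻¹ j i := fun i j => by
    conv_lhs => rw [← hA.inv.1.eq]
    simp [Matrix.conjTranspose_apply]
  rw [vecMulVec_eq (Fin 1), Matrix.det_add_replicateCol_mul_replicateRow hA.det_pos.ne'.isUnit]
  congr 1
  simp only [Matrix.det_unique, Matrix.add_apply, Matrix.one_apply_eq, Matrix.mul_apply,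
    Matrix.replicateRow_apply, Matrix.replicateCol_apply, dotProduct, mulVec, Finset.mul_sum, Finset.sum_mul]
  congr 1
  refine Finset.sum_congr rfl fun i _ => Finset.sum_congr rfl fun j _ => ?_
  rw [hsym i j]; ring

lemma det_le_trace_div_pow {A : Matrix (Fin d) (Fin d) ℝ} (hA : A.PosDef) (hd : 1 ≤ d) :
    A.det ≤ (A.trace / d) ^ d := by
  have hdpos : (0:ℝ) < d := by exact_mod_cast hd
  have hei := hA.eigenvalues_pos
  have hdet : A.det = ∏ i, hA.1.eigenvalues i := by
    rw [hA.1.det_eq_prod_eigenvalues]; norm_num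
  have htr : A.trace = ∑ i, hA.1.eigenvalues i := trace_herm hA.1
  have hgm := Real.geom_mean_le_arith_mean_weighted Finset.univ (fun _ => 1/(d:ℝ))
    (fun i => hA.1.eigenvalues i) (fun _ _ => by positivity)
    (by simp [Finset.card_univ]; field_simp) (fun i _ => (hei i).le)
  have hsum : ∑ i, (1/(d:ℝ)) * hA.1.eigenvalues i = A.trace / d := by
    rw [htr, Finset.sum_div]
    exact Finset.sum_congr rfl fun i _ => by ring
  rw [hsum] at hgm
  have hlhs : (∏ i, hA.1.eigenvalues i ^ ((1:ℝ)/(d:ℝ))) ^ d = A.det := by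
    rw [← Finset.prod_pow, hdet]
    refine Finset.prod_congr rfl fun i _ => ?_
    rw [← Real.rpow_natCast (hA.1.eigenvalues i ^ ((1:ℝ)/(d:ℝ))), ← Real.rpow_mul (hei i).le]
    rw [one_div, inv_mul_cancel₀ (by positivity : (d:ℝ) ≠ 0), Real.rpow_one]
  calc A.det = (∏ i, hA.1.eigenvalues i ^ ((1:ℝ)/(d:ℝ))) ^ d := hlhs.symm
  _ ≤ (A.trace / d) ^ d := by
      apply pow_le_pow_left₀ (Finset.prod_nonneg fun i _ => Real.rpow_nonneg (hei i).le _) hgm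

lemma min_le_two_log (u : ℝ) (hu : 0 ≤ u) : min u 1 ≤ 2 * Real.log (1 + u) := by
  rcases le_or_gt u 1 with h | h
  · rw [min_eq_left h]
    have h1 : Real.log (1 + u)⁻¹ ≤ (1 + u)⁻¹ - 1 :=
      Real.log_le_sub_one_of_pos (by positivity)
    rw [Real.log_inv] at h1
    have h2 : u / (1 + u) ≤ Real.log (1 + u) := by
      have h' : (1+u)⁻¹ - 1 = -(u/(1+u)) := by field_simp; ring
      linarith [h' ▸ h1]
    have h3 : u / 2 ≤ u / (1 + u) := by
      apply div_le_div_of_nonneg_left hu (by positivity) (by linarith)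
    linarith
  · rw [min_eq_right h.le]
    have hl : Real.log 2 ≤ Real.log (1 + u) := Real.log_le_log (by norm_num) (by linarith)
    linarith [Real.log_two_gt_d9]

end Helpers

theorem cumulative_regret_bound
    (d T : ℕ) (hd : 1 ≤ d) (lam B : ℝ) (hlam : 0 < lam) (hB : 0 ≤ B)
    (x : ℕ → Fin d → ℝ) (hx : ∀ t < T, Real.sqrt (∑ i, x t i ^ 2) ≤ B)
    (c : ℕ → ℝ) (hc : ∀ t < T, 0 ≤ c t)
    (S : ℕ → Matrix (Fin d) (Fin d) ℝ)
    (hS0 : S 0 = lam • (1 : Matrix (Fin d) (Fin d) ℝ))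
    (hSs : ∀ t < T, S (t + 1) =
      S t + vecMulVec (x t) (x t) + c t • (1 : Matrix (Fin d) (Fin d) ℝ))
    (β : ℝ) (hβ : 0 ≤ β) (r : ℕ → ℝ)
    (hr0 : ∀ t < T, 0 ≤ r t)
    (hr : ∀ t < T, r t ^ 2 ≤ 4 * β * min (x t ⬝ᵥ (S t)⁻¹ *ᵥ x t) 1) :
    ∑ t ∈ Finset.range T, r t ≤
      Real.sqrt (8 * T * β * d *
        Real.log (1 + ((T : ℝ) * B ^ 2 + d * ∑ t ∈ Finset.range T, c t) / (d * lam))) := by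
  have hdpos : (0:ℝ) < d := by exact_mod_cast hd
  set w2 : ℕ → ℝ := fun t => x t ⬝ᵥ (S t)⁻¹ *ᵥ x t with hw2def
  -- positive definiteness
  have hpos : ∀ t, t ≤ T → (S t).PosDef := by
    intro t
    induction t with
    | zero => intro _; rw [hS0]; exact posdef_smul_one hlam
    | succ t ih =>
      intro h
      rw [hSs t (by omega)]
      exact ((ih (by omega)).add_posSemidef (psd_vecMulVec _)).add_posSemidef
        (psd_smul_one (hc t (by omega)))
  have hw2 : ∀ t < T, 0 ≤ w2 t := by
    intro t ht
    have := (hpos t ht.le).inv.posSemidef.dotProduct_mulVec_nonneg (x t)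
    simpa using this
  -- determinant growth
  have hdet : ∀ n, n ≤ T → lam ^ d * ∏ t ∈ Finset.range n, (1 + w2 t) ≤ (S n).det := by
    intro n
    induction n with
    | zero => intro _; simp [hS0, Matrix.det_smul]
    | succ n ih =>
      intro h
      have hn : n < T := by omega
      have hSpos := hpos n hn.le
      calc lam ^ d * ∏ t ∈ Finset.range (n+1), (1 + w2 t)
          = (lam ^ d * ∏ t ∈ Finset.range n, (1 + w2 t)) * (1 + w2 n) := by
            rw [Finset.prod_range_succ]; ring
      _ ≤ (S n).det * (1 + w2 n) := by
            apply mul_le_mul_of_nonneg_right (ih hn.le)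
            linarith [hw2 n hn]
      _ = (S n + vecMulVec (x n) (x n)).det := (det_add_vecMulVec hSpos (x n)).symm
      _ ≤ (S n + vecMulVec (x n) (x n) + c n • 1).det :=
            det_le_det_add (hSpos.add_posSemidef (psd_vecMulVec _)) (psd_smul_one (hc n hn))
      _ = (S (n+1)).det := by rw [hSs n hn]
  -- trace bound
  have htr : ∀ n, n ≤ T →
      (S n).trace ≤ d * lam + n * B ^ 2 + d * ∑ t ∈ Finset.range n, c t := by
    intro n
    induction n with
    | zero => intro _; simp [hS0, Matrix.trace_smul, Matrix.trace_one, mul_comm]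
    | succ n ih =>
      intro h
      have hn : n < T := by omega
      have hxb : ∑ i, x n i ^ 2 ≤ B ^ 2 := by
        have h0 : (0:ℝ) ≤ ∑ i, x n i ^ 2 := Finset.sum_nonneg fun i _ => sq_nonneg _
        calc ∑ i, x n i ^ 2 = Real.sqrt (∑ i, x n i ^ 2) ^ 2 := (Real.sq_sqrt h0).symm
        _ ≤ B ^ 2 := pow_le_pow_left₀ (Real.sqrt_nonneg _) (hx n hn) 2
      have htv : (vecMulVec (x n) (x n)).trace = ∑ i, x n i ^ 2 := by
        simp [Matrix.trace, Matrix.diag, vecMulVec_apply, sq]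
      have hts : ((c n) • (1 : Matrix (Fin d) (Fin d) ℝ)).trace = c n * d := by
        simp [Matrix.trace_smul, Matrix.trace_one, mul_comm]
      rw [hSs n hn, Matrix.trace_add, Matrix.trace_add, htv, hts, Finset.sum_range_succ]
      have := ih hn.le
      push_cast
      nlinarith [hc n hn]
  -- the log quantity
  set Cs := ∑ t ∈ Finset.range T, c t with hCs
  have hCs0 : 0 ≤ Cs := Finset.sum_nonneg fun t ht => hc t (Finset.mem_range.mp ht)
  set Q := ((T:ℝ) * B ^ 2 + d * Cs) / (d * lam) with hQdef
  have hQ0 : 0 ≤ Q := by positivity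
  have hposT := hpos T le_rfl
  have htrT : (S T).trace / d ≤ lam * (1 + Q) := by
    have h1 := htr T le_rfl
    have h2 : lam * (1 + Q) = lam + ((T:ℝ) * B ^ 2 + d * Cs) / d := by
      rw [hQdef]; field_simp
    rw [h2, div_le_iff₀ hdpos]
    have : (0:ℝ) < d := hdpos
    calc (S T).trace ≤ d * lam + T * B ^ 2 + d * Cs := h1
    _ = (lam + ((T:ℝ) * B ^ 2 + d * Cs) / d) * d := by field_simp; ring
  have htr0 : 0 ≤ (S T).trace / d := by
    rw [trace_herm hposT.1]
    have : (0:ℝ) ≤ ∑ i, hposT.1.eigenvalues i :=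
      Finset.sum_nonneg fun i _ => (hposT.eigenvalues_pos i).le
    positivity
  have hdetub : (S T).det ≤ (lam * (1 + Q)) ^ d :=
    le_trans (det_le_trace_div_pow hposT hd) (pow_le_pow_left₀ htr0 htrT d)
  -- product bound
  have hprod : ∏ t ∈ Finset.range T, (1 + w2 t) ≤ (1 + Q) ^ d := by
    have h1 := le_trans (hdet T le_rfl) hdetub
    have h2 : (lam * (1 + Q)) ^ d = lam ^ d * (1 + Q) ^ d := mul_pow _ _ _
    rw [h2] at h1
    exact le_of_mul_le_mul_left h1 (by positivity)
  -- sum of logs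
  have hlogsum : ∑ t ∈ Finset.range T, Real.log (1 + w2 t) ≤ d * Real.log (1 + Q) := by
    have hpos1 : ∀ t ∈ Finset.range T, (0:ℝ) < 1 + w2 t := fun t ht => by
      linarith [hw2 t (Finset.mem_range.mp ht)]
    rw [← Real.log_prod (fun t ht => (hpos1 t ht).ne')]
    calc Real.log (∏ t ∈ Finset.range T, (1 + w2 t))
        ≤ Real.log ((1 + Q) ^ d) :=
          Real.log_le_log (Finset.prod_pos hpos1) hprod
    _ = d * Real.log (1 + Q) := by rw [Real.log_pow]
  -- sum of squares
  have hsq : ∑ t ∈ Finset.range T, r t ^ 2 ≤ 8 * β * d * Real.log (1 + Q) := by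
    calc ∑ t ∈ Finset.range T, r t ^ 2
        ≤ ∑ t ∈ Finset.range T, 4 * β * (2 * Real.log (1 + w2 t)) := by
          refine Finset.sum_le_sum fun t ht => ?_
          have htT := Finset.mem_range.mp ht
          refine le_trans (hr t htT) ?_
          exact mul_le_mul_of_nonneg_left (min_le_two_log _ (hw2 t htT)) (by positivity)
    _ = 8 * β * ∑ t ∈ Finset.range T, Real.log (1 + w2 t) := by
          rw [Finset.mul_sum]; exact Finset.sum_congr rfl fun t _ => by ring
    _ ≤ 8 * β * (d * Real.log (1 + Q)) :=
          mul_le_mul_of_nonneg_left hlogsum (by positivity)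
    _ = 8 * β * d * Real.log (1 + Q) := by ring
  -- Cauchy–Schwarz and conclusion
  have hsnn : 0 ≤ ∑ t ∈ Finset.range T, r t :=
    Finset.sum_nonneg fun t ht => hr0 t (Finset.mem_range.mp ht)
  have hcs : (∑ t ∈ Finset.range T, r t) ^ 2 ≤ T * ∑ t ∈ Finset.range T, r t ^ 2 := by
    have := sq_sum_le_card_mul_sum_sq (s := Finset.range T) (f := r)
    simpa using this
  have hfinal : (∑ t ∈ Finset.range T, r t) ^ 2 ≤
      8 * T * β * d * Real.log (1 + Q) := by
    calc (∑ t ∈ Finset.range T, r t) ^ 2 ≤ T * ∑ t ∈ Finset.range T, r t ^ 2 := hcs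
    _ ≤ T * (8 * β * d * Real.log (1 + Q)) :=
        mul_le_mul_of_nonneg_left hsq (by positivity)
    _ = 8 * T * β * d * Real.log (1 + Q) := by ring
  have hlog0 : 0 ≤ Real.log (1 + Q) := Real.log_nonneg (by linarith)
  exact (Real.le_sqrt hsnn (by positivity)).mpr hfinal
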